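/- Define integers M(n,k) for n, k ≥ 0 by M(0,0) = 1, M(0,k) = 0 for k ≥ 1, M(n,k) = 0 for k < 0, and the recurrence M(n+1,k) = (n+2k+2)·M(n,k) + (n−2k+2)·M(n,k−1). Then for all n ≥ 0 and 0 ≤ k ≤ ⌊n/2⌋, M(n,k) = n! · C(n+1, 2k+1). -/

import Mathlib

/-- The coefficients M(n,k): M(0,0)=1, M(0,k)=0 for k ≠ 0 (in particular k ≥ 1 and k < 0),
and M(n+1,k) = (n+2k+2)·M(n,k) + (n−2k+2)·M(n,k−1). -/
def M : ℕ → ℤ → ℤ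
  | 0, k => if k = 0 then 1 else 0
  | n + 1, k => ((n : ℤ) + 2 * k + 2) * M n k + ((n : ℤ) - 2 * k + 2) * M n (k - 1)

lemma M_neg (n : ℕ) : ∀ k : ℤ, k < 0 → M n k = 0 := by
  induction n with
  | zero => intro k hk; simp [M, hk.ne]
  | succ n ih =>
      intro k hk
      rw [M, ih k hk, ih (k - 1) (by omega)]
      ring

lemma key (n j : ℕ) :
    ((n:ℤ) + 2*(j+1) + 2) * ((n+1).choose (2*(j+1)+1)) +
      ((n:ℤ) - 2*(j+1) + 2) * ((n+1).choose (2*j+1))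
    = ((n:ℤ) + 1) * ((n+2).choose (2*(j+1)+1)) := by
  set k := j + 1 with hkdef
  have hA := Nat.choose_succ_right_eq (n+1) (2*k)
  have hB := Nat.choose_succ_right_eq (n+1) (2*j+1)
  have hP : (n+2).choose (2*k+1) = (n+1).choose (2*k) + (n+1).choose (2*k+1) :=
    Nat.choose_succ_succ _ _
  rcases le_or_gt (2*k) (n+1) with h | h
  · have hA' : ((n+1).choose (2*k+1) : ℤ) * (2*k+1)
        = ((n+1).choose (2*k) : ℤ) * ((n:ℤ)+1-2*k) := by
      have := hA
      zify [h] at this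
      push_cast at this ⊢
      linarith [this]
    have hB' : ((n+1).choose (2*j+2) : ℤ) * (2*j+2)
        = ((n+1).choose (2*j+1) : ℤ) * ((n:ℤ)+1-(2*j+1)) := by
      have := hB
      zify [show 2*j+1 ≤ n+1 by omega] at this
      push_cast at this ⊢
      linarith [this]
    have hP' : ((n+2).choose (2*k+1) : ℤ)
        = ((n+1).choose (2*k) : ℤ) + ((n+1).choose (2*k+1) : ℤ) := by
      exact_mod_cast congrArg (Nat.cast : ℕ → ℤ) hP
    have hkk : 2*k = 2*j+2 := by omega
    rw [hkk] at hA' hP' ⊢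
    push_cast at hA' hB' hP' ⊢
    have hkz : (k:ℤ) = j+1 := by rw [hkdef]; push_cast; ring
    linear_combination hA' - hB' - ((n:ℤ)+1) * hP' - 2 * (((n+1).choose (2*j+2+1) : ℤ) + ((n+1).choose (2*j+2) : ℤ)) * hkz
  · have h1 : ((n+1).choose (2*k+1) : ℤ) = 0 := by
      rw [Nat.choose_eq_zero_of_lt (by omega)]; simp
    have h0 : ((n+2).choose (2*k+1) : ℤ) = 0 := by
      rw [Nat.choose_eq_zero_of_lt (by omega)]; simp
    rcases eq_or_lt_of_le (show n + 2 ≤ 2*k by omega) with heq | hlt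
    · have : ((n:ℤ) - 2*k + 2) = 0 := by
        have : (n:ℤ) + 2 = 2*k := by exact_mod_cast congrArg (Nat.cast : ℕ → ℤ) heq
        linarith
      rw [h1, h0]
      push_cast at this ⊢
      nlinarith [this]
    · have h2 : ((n+1).choose (2*j+1) : ℤ) = 0 := by
        rw [Nat.choose_eq_zero_of_lt (by omega)]; simp
      rw [h1, h0, h2]; ring

lemma M_eq (n : ℕ) : ∀ k : ℕ, M n (k : ℤ) = (n.factorial : ℤ) * ((n + 1).choose (2 * k + 1)) := by
  induction n with
  | zero =>
      intro k
      rcases k with _ | j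
      · simp [M]
      · rw [M]
        rw [if_neg (by push_cast; omega)]
        rw [Nat.choose_eq_zero_of_lt (by omega)]
        simp
  | succ n ih =>
      intro k
      rcases k with _ | j
      · rw [M]
        have hneg : ((0:ℕ):ℤ) - 1 < 0 := by norm_num
        rw [M_neg n _ hneg, ih 0]
        simp [Nat.factorial_succ, Nat.choose_one_right]
        push_cast
        ring
      · rw [M]
        have h1 : ((j+1:ℕ):ℤ) - 1 = (j:ℤ) := by push_cast; ring
        rw [h1, show ((j:ℤ)) = ((j:ℕ):ℤ) from rfl, ih (j+1), ih j]
        have := key n j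
        have hf : ((n+1).factorial : ℤ) = ((n:ℤ)+1) * (n.factorial : ℤ) := by
          rw [Nat.factorial_succ]; push_cast; ring
        rw [hf]
        push_cast at this ⊢
        nlinarith [this, sq_nonneg ((n:ℤ))]

theorem M_eq_factorial_choose (n k : ℕ) (hk : k ≤ n / 2) :
    M n k = (n.factorial : ℤ) * ((n + 1).choose (2 * k + 1)) := by
  exact M_eq n k
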